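/- Let k be an algebraically closed field. For every (x, y, z, u, v, w, P) ∈ k⁷ satisfying P² = (w·z + v·y + u·x − x·y·z)·P − x² − y² − z² + u·y·z + v·x·z + w·x·y − u·v·w − u² − v² − w² + 4, there exist A, B, C ∈ SL_2(k) with t_A = x, t_B = y, t_C = z, t_{BC} = u, t_{AC} = v, t_{AB} = w and t_{ABC} = P. -/

import Mathlib

set_option maxHeartbeats 1000000

/-- The trace of an element of `SL₂(k)`, viewed as a matrix. -/
def trSL {k : Type*} [CommRing k] (M : Matrix.SpecialLinearGroup (Fin 2) k) : k :=
  Matrix.trace (M : Matrix (Fin 2) (Fin 2) k)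

private lemma slmul {k : Type*} [CommRing k] (A B : Matrix (Fin 2) (Fin 2) k) (hA : A.det = 1) (hB : B.det = 1) :
    ((@HMul.hMul (Matrix.SpecialLinearGroup (Fin 2) k) (Matrix.SpecialLinearGroup (Fin 2) k) (Matrix.SpecialLinearGroup (Fin 2) k) _ (Subtype.mk A hA) (Subtype.mk B hB) : Matrix.SpecialLinearGroup (Fin 2) k) : Matrix (Fin 2) (Fin 2) k) = A * B := rfl

private lemma slmul2 {k : Type*} [CommRing k] (X : Matrix.SpecialLinearGroup (Fin 2) k) (B : Matrix (Fin 2) (Fin 2) k) (hB : B.det = 1) :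
    ((@HMul.hMul (Matrix.SpecialLinearGroup (Fin 2) k) (Matrix.SpecialLinearGroup (Fin 2) k) (Matrix.SpecialLinearGroup (Fin 2) k) _ X (Subtype.mk B hB) : Matrix.SpecialLinearGroup (Fin 2) k) : Matrix (Fin 2) (Fin 2) k) = (X : Matrix (Fin 2) (Fin 2) k) * B := rfl

section Aux

variable {k : Type*} [Field k] [IsAlgClosed k]

private lemma quadRoot (s t : k) : ∃ r : k, r ^ 2 - s * r + t = 0 := by
  obtain ⟨r, hr⟩ := IsAlgClosed.exists_root
    (p := Polynomial.X ^ 2 - Polynomial.C s * Polynomial.X + Polynomial.C t) (by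
      intro hdeg
      have h2 : (Polynomial.X ^ 2 - Polynomial.C s * Polynomial.X + Polynomial.C t :
          Polynomial k).degree = 2 := by compute_degree!
      rw [hdeg] at h2; simp at h2)
  refine ⟨r, ?_⟩
  have h := hr
  simp only [Polynomial.IsRoot, Polynomial.eval_add, Polynomial.eval_sub, Polynomial.eval_pow,
    Polynomial.eval_mul, Polynomial.eval_X, Polynomial.eval_C] at h
  linear_combination h

private lemma trSL_comm (M N : Matrix.SpecialLinearGroup (Fin 2) k) :
    trSL (M * N) = trSL (N * M) := by
  simp only [trSL, Matrix.SpecialLinearGroup.coe_mul]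
  exact Matrix.trace_mul_comm _ _

private lemma trSL_cyc (M N O : Matrix.SpecialLinearGroup (Fin 2) k) :
    trSL (M * N * O) = trSL (O * M * N) := by
  rw [trSL_comm, ← mul_assoc]

/-- The conclusion, abbreviated. -/
private def Concl (x y z u v w P : k) : Prop :=
  ∃ A B C : Matrix.SpecialLinearGroup (Fin 2) k,
      trSL A = x ∧ trSL B = y ∧ trSL C = z ∧
      trSL (B * C) = u ∧ trSL (A * C) = v ∧ trSL (A * B) = w ∧
      trSL (A * B * C) = P

private lemma rot (x y z u v w P : k) (H : Concl y z x v w u P) : Concl x y z u v w P := by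
  obtain ⟨A, B, C, h1, h2, h3, h4, h5, h6, h7⟩ := H
  refine ⟨C, A, B, h3, h1, h2, h6, ?_, ?_, ?_⟩
  · rw [trSL_comm]; exact h4
  · rw [trSL_comm]; exact h5
  · rw [trSL_cyc, trSL_cyc]; exact h7

private lemma case1 (x y z u v w P : k)
    (h : P ^ 2 = (w * z + v * y + u * x - x * y * z) * P
        - x ^ 2 - y ^ 2 - z ^ 2 + u * y * z + v * x * z + w * x * y
        - u * v * w - u ^ 2 - v ^ 2 - w ^ 2 + 4)
    (hD : x^2+y^2+w^2-x*y*w-4 ≠ 0) : Concl x y z u v w P := by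
  obtain ⟨b, hb⟩ := quadRoot w (1:k)
  have hDinv : (x^2+y^2+w^2-x*y*w-4) * (x^2+y^2+w^2-x*y*w-4)⁻¹ = 1 := mul_inv_cancel₀ hD
  have keyC : (P*w - 2*P*b - z*b*w + 2*z*b^2 - y*v*w + y*v*b - y*u + y^2*z + x*v*b*w - x*v*b^2 + x*u*b - x*y*z*b) + (-P*w + 2*P*b + z*w^2 - 3*z*b*w + 2*z*b^2 + y*v*w - y*v*b + y*u - x*v*b*w + x*v*b^2 - x*u*b - x*y*z*w + x*y*z*b + x^2*z*b*w - x^2*z*b^2) = z * (x^2+y^2+w^2-x*y*w-4) := by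
    linear_combination (4*z - x^2*z) * hb
  have keyAC : x * (P*w - 2*P*b - z*b*w + 2*z*b^2 - y*v*w + y*v*b - y*u + y^2*z + x*v*b*w - x*v*b^2 + x*u*b - x*y*z*b) - (-v*w^2 + 3*v*b*w - 2*v*b^2 - u*w + 2*u*b - y*P + y*z*w - y*z*b + x*P*w - x*P*b - x*z*b*w + x*z*b^2) + (-v*b*w + 2*v*b^2 - u*w + 2*u*b - y*P + y*z*w - y*z*b + y^2*v + x*P*b - x*z*b^2 - x*y*v*b + x*y*u - x*y^2*z - x^2*u*b + x^2*y*z*b) = v * (x^2+y^2+w^2-x*y*w-4) := by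
    linear_combination (4*v - x^2*v) * hb
  have keyBC : b * (-v*w^2 + 3*v*b*w - 2*v*b^2 - u*w + 2*u*b - y*P + y*z*w - y*z*b + x*P*w - x*P*b - x*z*b*w + x*z*b^2) - (w-b) * (-v*b*w + 2*v*b^2 - u*w + 2*u*b - y*P + y*z*w - y*z*b + y^2*v + x*P*b - x*z*b^2 - x*y*v*b + x*y*u - x*y^2*z - x^2*u*b + x^2*y*z*b) + y * (-P*w + 2*P*b + z*w^2 - 3*z*b*w + 2*z*b^2 + y*v*w - y*v*b + y*u - x*v*b*w + x*v*b^2 - x*u*b - x*y*z*w + x*y*z*b + x^2*z*b*w - x^2*z*b^2) = u * (x^2+y^2+w^2-x*y*w-4) := by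
    linear_combination (4*u - x^2*u) * hb
  have keyABC : (w-b) * (P*w - 2*P*b - z*b*w + 2*z*b^2 - y*v*w + y*v*b - y*u + y^2*z + x*v*b*w - x*v*b^2 + x*u*b - x*y*z*b) + (x*b-y) * (-v*w^2 + 3*v*b*w - 2*v*b^2 - u*w + 2*u*b - y*P + y*z*w - y*z*b + x*P*w - x*P*b - x*z*b*w + x*z*b^2) + b * (-P*w + 2*P*b + z*w^2 - 3*z*b*w + 2*z*b^2 + y*v*w - y*v*b + y*u - x*v*b*w + x*v*b^2 - x*u*b - x*y*z*w + x*y*z*b + x^2*z*b*w - x^2*z*b^2) = P * (x^2+y^2+w^2-x*y*w-4) := by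
    linear_combination (4*P - x^2*P) * hb
  have keyDet : (P*w - 2*P*b - z*b*w + 2*z*b^2 - y*v*w + y*v*b - y*u + y^2*z + x*v*b*w - x*v*b^2 + x*u*b - x*y*z*b) * (-P*w + 2*P*b + z*w^2 - 3*z*b*w + 2*z*b^2 + y*v*w - y*v*b + y*u - x*v*b*w + x*v*b^2 - x*u*b - x*y*z*w + x*y*z*b + x^2*z*b*w - x^2*z*b^2) - (-v*b*w + 2*v*b^2 - u*w + 2*u*b - y*P + y*z*w - y*z*b + y^2*v + x*P*b - x*z*b^2 - x*y*v*b + x*y*u - x*y^2*z - x^2*u*b + x^2*y*z*b) * (-v*w^2 + 3*v*b*w - 2*v*b^2 - u*w + 2*u*b - y*P + y*z*w - y*z*b + x*P*w - x*P*b - x*z*b*w + x*z*b^2) = (x^2+y^2+w^2-x*y*w-4)^2 := by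
    linear_combination (-4*P^2 - 4*v^2 + v^2*w^2 - 4*v^2*b*w + 4*v^2*b^2 - 4*u*v*w - 4*u^2 + 4*z*P*w - 4*z^2 + z^2*w^2 - 4*z^2*b*w + 4*z^2*b^2 + 4*y*v*P + 4*y*z*u + y^2*v^2 + y^2*z^2 + 4*x*u*P + 4*x*z*v - x*z*v*w^2 + 4*x*z*v*b*w - 4*x*z*v*b^2 - x*y*v^2*w - 4*x*y*z*P - x*y*z^2*w - x*y^2*z*v + x^2*P^2 + x^2*v^2 + x^2*v^2*b*w - x^2*v^2*b^2 + x^2*u*v*w + x^2*u^2 - x^2*z*P*w + x^2*z^2 + x^2*z^2*b*w - x^2*z^2*b^2 - x^2*y*v*P + x^2*y*z*v*w - x^2*y*z*u - x^3*u*P - x^3*z*v - x^3*z*v*b*w + x^3*z*v*b^2 + x^3*y*z*P) * hb - (x^2+y^2+w^2-x*y*w-4) * h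
  refine ⟨⟨!![x, -1; 1, 0], by rw [Matrix.det_fin_two_of]; ring⟩,
         ⟨!![0, b; -(w-b), y], by rw [Matrix.det_fin_two_of]; linear_combination -hb⟩,
         ⟨!![(P*w - 2*P*b - z*b*w + 2*z*b^2 - y*v*w + y*v*b - y*u + y^2*z + x*v*b*w - x*v*b^2 + x*u*b - x*y*z*b)/(x^2+y^2+w^2-x*y*w-4), (-v*b*w + 2*v*b^2 - u*w + 2*u*b - y*P + y*z*w - y*z*b + y^2*v + x*P*b - x*z*b^2 - x*y*v*b + x*y*u - x*y^2*z - x^2*u*b + x^2*y*z*b)/(x^2+y^2+w^2-x*y*w-4); (-v*w^2 + 3*v*b*w - 2*v*b^2 - u*w + 2*u*b - y*P + y*z*w - y*z*b + x*P*w - x*P*b - x*z*b*w + x*z*b^2)/(x^2+y^2+w^2-x*y*w-4), (-P*w + 2*P*b + z*w^2 - 3*z*b*w + 2*z*b^2 + y*v*w - y*v*b + y*u - x*v*b*w + x*v*b^2 - x*u*b - x*y*z*w + x*y*z*b + x^2*z*b*w - x^2*z*b^2)/(x^2+y^2+w^2-x*y*w-4)], by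
            rw [Matrix.det_fin_two_of]
            linear_combination
              ((x^2+y^2+w^2-x*y*w-4)⁻¹*(x^2+y^2+w^2-x*y*w-4)⁻¹) * keyDet +
              ((x^2+y^2+w^2-x*y*w-4) * (x^2+y^2+w^2-x*y*w-4)⁻¹ + 1) * hDinv⟩,
         ?_, ?_, ?_, ?_, ?_, ?_, ?_⟩
  · simp only [trSL, Matrix.trace_fin_two, Matrix.SpecialLinearGroup.coe_mul, slmul, slmul2,
      Matrix.mul_apply, Fin.sum_univ_two, Matrix.cons_val', Matrix.cons_val_zero,
      Matrix.cons_val_one, Matrix.head_cons, Matrix.empty_val',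
      Matrix.cons_val_fin_one, Matrix.head_fin_const, Matrix.of_apply]
    ring
  · simp only [trSL, Matrix.trace_fin_two, Matrix.SpecialLinearGroup.coe_mul, slmul, slmul2,
      Matrix.mul_apply, Fin.sum_univ_two, Matrix.cons_val', Matrix.cons_val_zero,
      Matrix.cons_val_one, Matrix.head_cons, Matrix.empty_val',
      Matrix.cons_val_fin_one, Matrix.head_fin_const, Matrix.of_apply]
    ring
  · simp only [trSL, Matrix.trace_fin_two, Matrix.SpecialLinearGroup.coe_mul, slmul, slmul2,
      Matrix.mul_apply, Fin.sum_univ_two, Matrix.cons_val', Matrix.cons_val_zero,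
      Matrix.cons_val_one, Matrix.head_cons, Matrix.empty_val',
      Matrix.cons_val_fin_one, Matrix.head_fin_const, Matrix.of_apply]
    linear_combination ((x^2+y^2+w^2-x*y*w-4)⁻¹) * keyC + z * hDinv
  · simp only [trSL, Matrix.trace_fin_two, Matrix.SpecialLinearGroup.coe_mul, slmul, slmul2,
      Matrix.mul_apply, Fin.sum_univ_two, Matrix.cons_val', Matrix.cons_val_zero,
      Matrix.cons_val_one, Matrix.head_cons, Matrix.empty_val',
      Matrix.cons_val_fin_one, Matrix.head_fin_const, Matrix.of_apply]
    linear_combination ((x^2+y^2+w^2-x*y*w-4)⁻¹) * keyBC + u * hDinv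
  · simp only [trSL, Matrix.trace_fin_two, Matrix.SpecialLinearGroup.coe_mul, slmul, slmul2,
      Matrix.mul_apply, Fin.sum_univ_two, Matrix.cons_val', Matrix.cons_val_zero,
      Matrix.cons_val_one, Matrix.head_cons, Matrix.empty_val',
      Matrix.cons_val_fin_one, Matrix.head_fin_const, Matrix.of_apply]
    linear_combination ((x^2+y^2+w^2-x*y*w-4)⁻¹) * keyAC + v * hDinv
  · simp only [trSL, Matrix.trace_fin_two, Matrix.SpecialLinearGroup.coe_mul, slmul, slmul2,
      Matrix.mul_apply, Fin.sum_univ_two, Matrix.cons_val', Matrix.cons_val_zero,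
      Matrix.cons_val_one, Matrix.head_cons, Matrix.empty_val',
      Matrix.cons_val_fin_one, Matrix.head_fin_const, Matrix.of_apply]
    ring
  · simp only [trSL, Matrix.trace_fin_two, Matrix.SpecialLinearGroup.coe_mul, slmul, slmul2,
      Matrix.mul_apply, Fin.sum_univ_two, Matrix.cons_val', Matrix.cons_val_zero,
      Matrix.cons_val_one, Matrix.head_cons, Matrix.empty_val',
      Matrix.cons_val_fin_one, Matrix.head_fin_const, Matrix.of_apply]
    linear_combination ((x^2+y^2+w^2-x*y*w-4)⁻¹) * keyABC + P * hDinv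

private lemma case2aux (x y z u v w P : k)
    (h : P ^ 2 = (w * z + v * y + u * x - x * y * z) * P
        - x ^ 2 - y ^ 2 - z ^ 2 + u * y * z + v * x * z + w * x * y
        - u * v * w - u ^ 2 - v ^ 2 - w ^ 2 + 4)
    (hD : x^2+y^2+w^2-x*y*w-4 = 0)
    (a : k) (ha : a^2 - x*a + 1 = 0) (ha0 : a ≠ 0) (ha1 : a^2 ≠ 1)
    (hw : a*y - w ≠ 0) : Concl x y z u v w P := by
  have hm : (2*a - x) ≠ 0 := by
    intro h0
    apply ha1
    have h1 : a^2 - 1 = (2*a - x) * a := by linear_combination -ha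
    rw [h0, zero_mul, sub_eq_zero] at h1
    exact h1
  have hbex : ∃ t : k, t^2 - y*t + 1 = 0 ∧ a^2*t^2 - w*a*t + 1 = 0 := by
    obtain ⟨s, hs1⟩ := quadRoot y (1:k)
    have hs0 : s ≠ 0 := by intro h0; rw [h0] at hs1; simp at hs1
    have hprod : s * ((a^2*s^2 - w*a*s + 1) * (a^2*(y-s)^2 - w*a*(y-s) + 1)) = 0 := by
      linear_combination
        (a*w + a^3*w + 2*s*a^2 - s*a^2*w^2 - s*a^4 + s^3*a^4 + y*s*a^3*w - y*s^2*a^4 - x*a^2*w) * hs1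
        + (-(a*w) + s + s*a^2 - s^2*a*w + x*s*a) * ha + (a^2*s) * hD
    rcases mul_eq_zero.mp hprod with h0 | hprod
    · exact absurd h0 hs0
    rcases mul_eq_zero.mp hprod with h1 | h1
    · exact ⟨s, hs1, h1⟩
    · exact ⟨y - s, by linear_combination hs1, h1⟩
  obtain ⟨t, ht1, ht2⟩ := hbex
  have ht0 : t ≠ 0 := by
    intro h0; rw [h0] at ht1; simp at ht1
  obtain ⟨c, f, hcf1, hcf2⟩ :
      ∃ c f : k, c + f = z ∧ a*c + (x - a)*f = v := by
    refine ⟨(v - (x-a)*z)/(2*a - x), (a*z - v)/(2*a - x), ?_, ?_⟩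
    · rw [← add_div, div_eq_iff hm]; ring
    · rw [mul_div_assoc', mul_div_assoc', ← add_div, div_eq_iff hm]; ring
  have hat : a * t ≠ 0 := mul_ne_zero ha0 ht0
  have key : a^2 * t^2 *
      ((P - (a*t*c + a*(u - t*c - (y-t)*f) + (x-a)*(y-t)*f)) *
       (P - (a*t*c + (x-a)*(u - t*c - (y-t)*f) + (x-a)*(y-t)*f))) = 0 := by
    linear_combination (1 + t*a*w + t^2*a^2 + u*v*t*a - z*P*t*a - x*y*t*a) * ht2 + (a^2 + t^2*a^2 + 4*t^2*a^4*c*f - 2*P*t*a^3*f - v*P*t*a^2 - 2*u*t*a^4*f - z*u*t*a^2 + y*t*a^2 - x*a - x*t^2*a^3 - 4*x*t^2*a^3*c*f + x*P*t*a^2*f + 3*x*u*t*a^3*f + x*z*P*t*a^2 + x^2*t^2*a^2*c*f - x^2*u*t*a^2*f) * ht1 + (-t^2*a^3*f + t^2*a^3*c - P*t*a^2 - P*t^3*a^2 + v*t^2*a^2 + u*t*a + u*t^3*a^3 + x*t^2*a^2*f - x*z*t^2*a^2) * hcf2 + (t^2*a^2*f + t^2*a^2*c - P*t*a - P*t^3*a^3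 - u*t*a^2 - u*t^3*a^2 + z*t^2*a^2 + x*t^2*a^3*f - x*t^2*a^3*c + x*P*t*a^2 + x*P*t^3*a^2 - x^2*t^2*a^2*f) * hcf1 +
      (-1 - t^2*a^2*f^2 - 2*t^2*a^2*c*f - t^2*a^2*c^2 - t^4*a^2 + P*t*a*f + P*t*a*c + 2*u*t*a^2*f + u*t^3*a^2*f + u*t^3*a^2*c - u^2*t^2*a^2 + x*t^2*a - x*u*t*a*f) * ha + (a^2*t^2) * h
  rw [mul_eq_zero] at key
  rcases key with key | key
  · exact absurd key (by intro h0; exact hat (by rw [← mul_pow] at h0; exact pow_eq_zero_iff (two_ne_zero) |>.mp h0))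
  have hABw : a*t + (x-a)*(y-t) = w := by
    have h1 : (a*t) * (a*t + (x-a)*(y-t)) = (a*t) * w := by
      linear_combination ht2 + (a^2 - x*a) * ht1 - ha
    exact mul_left_cancel₀ hat h1
  rw [mul_eq_zero] at key
  rcases key with key | key <;> rw [sub_eq_zero] at key
  · -- P = P₀ : use (A, B, C)
    refine ⟨⟨!![a, 0; 0, x-a], by rw [Matrix.det_fin_two_of]; linear_combination -ha⟩,
           ⟨!![t, u - t*c - (y-t)*f; 0, y-t], by
              rw [Matrix.det_fin_two_of]; linear_combination -ht1⟩,
           ⟨!![c, c*f-1; 1, f], by rw [Matrix.det_fin_two_of]; ring⟩,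
           ?_, ?_, ?_, ?_, ?_, ?_, ?_⟩ <;>
      simp only [trSL, Matrix.trace_fin_two, Matrix.SpecialLinearGroup.coe_mul, slmul, slmul2,
        Matrix.mul_apply, Fin.sum_univ_two, Matrix.cons_val', Matrix.cons_val_zero,
        Matrix.cons_val_one, Matrix.head_cons, Matrix.empty_val',
        Matrix.cons_val_fin_one, Matrix.head_fin_const, Matrix.of_apply]
    · ring
    · ring
    · linear_combination hcf1
    · ring
    · linear_combination hcf2
    · linear_combination hABw
    · linear_combination -key
  · -- P = P₁ : use the transposed triple
    refine ⟨⟨!![a, 0; 0, x-a], by rw [Matrix.det_fin_two_of]; linear_combination -ha⟩,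
           ⟨!![t, 0; u - t*c - (y-t)*f, y-t], by
              rw [Matrix.det_fin_two_of]; linear_combination -ht1⟩,
           ⟨!![c, 1; c*f-1, f], by rw [Matrix.det_fin_two_of]; ring⟩,
           ?_, ?_, ?_, ?_, ?_, ?_, ?_⟩ <;>
      simp only [trSL, Matrix.trace_fin_two, Matrix.SpecialLinearGroup.coe_mul, slmul, slmul2,
        Matrix.mul_apply, Fin.sum_univ_two, Matrix.cons_val', Matrix.cons_val_zero,
        Matrix.cons_val_one, Matrix.head_cons, Matrix.empty_val',
        Matrix.cons_val_fin_one, Matrix.head_fin_const, Matrix.of_apply]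
    · ring
    · ring
    · linear_combination hcf1
    · ring
    · linear_combination hcf2
    · linear_combination hABw
    · linear_combination -key

private lemma case2 (x y z u v w P : k)
    (h : P ^ 2 = (w * z + v * y + u * x - x * y * z) * P
        - x ^ 2 - y ^ 2 - z ^ 2 + u * y * z + v * x * z + w * x * y
        - u * v * w - u ^ 2 - v ^ 2 - w ^ 2 + 4)
    (hD : x^2+y^2+w^2-x*y*w-4 = 0)
    (hx : x^2 ≠ 4) : Concl x y z u v w P := by
  obtain ⟨a, ha⟩ := quadRoot x (1:k)
  have ha' : a * (x - a) = 1 := by linear_combination -ha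
  have ha0 : a ≠ 0 := by
    intro h0; rw [h0, zero_mul] at ha'; exact zero_ne_one ha'
  have ha0' : x - a ≠ 0 := by
    intro h0; rw [h0, mul_zero] at ha'; exact zero_ne_one ha'
  have hsq : ∀ r : k, r^2 - x*r + 1 = 0 → r ≠ 0 → r^2 ≠ 1 := by
    intro r hr hr0 h1
    apply hx
    have h4 : (x^2 - 4) * r^2 = 0 := by
      linear_combination (-(r^2 + x*r - 1) - 2) * hr + (r^2 - 1) * h1
    rcases mul_eq_zero.mp h4 with h5 | h5
    · linear_combination h5
    · exact absurd h5 (pow_ne_zero 2 hr0)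
  have ha1 : a^2 ≠ 1 := hsq a ha ha0
  have ha2 : (x-a)^2 - x*(x-a) + 1 = 0 := by linear_combination ha
  have ha2' : (x-a)^2 ≠ 1 := hsq (x-a) ha2 ha0'
  by_cases hw : a*y - w = 0
  · have hw2 : (x-a)*y - w ≠ 0 := by
      intro h0
      have hm : (2*a - x) ≠ 0 := by
        intro h1
        apply ha1
        have h2 : a^2 - 1 = (2*a - x) * a := by linear_combination -ha
        rw [h1, zero_mul, sub_eq_zero] at h2
        exact h2
      have hy : (2*a - x) * y = 0 := by linear_combination hw - h0
      have hy0 : y = 0 := by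
        rcases mul_eq_zero.mp hy with h5 | h5
        · exact absurd h5 hm
        · exact h5
      have hw0 : w = 0 := by rw [hy0] at hw; linear_combination -hw
      apply hx
      rw [hy0, hw0] at hD
      linear_combination hD
    exact case2aux x y z u v w P h hD (x-a) ha2 ha0' ha2' hw2
  · exact case2aux x y z u v w P h hD a ha ha0 ha1 hw

end Aux

/-- Over an algebraically closed field, every point of the hypersurface
`P² = (wz + vy + ux − xyz)P − x² − y² − z² + uyz + vxz + wxy − uvw − u² − v² − w² + 4`
is realized by a triple of matrices in `SL₂(k)`. -/
theorem surjective_onto_hypersurface {k : Type*} [Field k] [IsAlgClosed k]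
    (x y z u v w P : k)
    (h : P ^ 2 = (w * z + v * y + u * x - x * y * z) * P
        - x ^ 2 - y ^ 2 - z ^ 2 + u * y * z + v * x * z + w * x * y
        - u * v * w - u ^ 2 - v ^ 2 - w ^ 2 + 4) :
    ∃ A B C : Matrix.SpecialLinearGroup (Fin 2) k,
      trSL A = x ∧ trSL B = y ∧ trSL C = z ∧
      trSL (B * C) = u ∧ trSL (A * C) = v ∧ trSL (A * B) = w ∧
      trSL (A * B * C) = P := by
  rcases ne_or_eq (x^2+y^2+w^2-x*y*w-4) 0 with hD1 | hD1
  · exact case1 x y z u v w P h hD1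
  rcases ne_or_eq (y^2+z^2+u^2-y*z*u-4) 0 with hD2 | hD2
  · exact rot x y z u v w P (case1 y z x v w u P (by linear_combination h) hD2)
  rcases ne_or_eq (z^2+x^2+v^2-z*x*v-4) 0 with hD3 | hD3
  · exact rot x y z u v w P (rot y z x v w u P (case1 z x y w u v P (by linear_combination h) hD3))
  rcases ne_or_eq (x^2) 4 with hx | hx
  · exact case2 x y z u v w P h hD1 hx
  rcases ne_or_eq (y^2) 4 with hy | hy
  · exact rot x y z u v w P (case2 y z x v w u P (by linear_combination h) hD2 hy)
  rcases ne_or_eq (z^2) 4 with hz | hz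
  · exact rot x y z u v w P (rot y z x v w u P (case2 z x y w u v P (by linear_combination h) hD3 hz))
  -- fully degenerate case: scalar matrices
  obtain ⟨p, hp⟩ := quadRoot x (1:k)
  obtain ⟨q, hq⟩ := quadRoot y (1:k)
  obtain ⟨r, hr⟩ := quadRoot z (1:k)
  have hp' : p * (x - p) = 1 := by linear_combination -hp
  have hp0 : p ≠ 0 := by intro h0; rw [h0, zero_mul] at hp'; exact zero_ne_one hp'
  have hq' : q * (y - q) = 1 := by linear_combination -hq
  have hq0 : q ≠ 0 := by intro h0; rw [h0, zero_mul] at hq'; exact zero_ne_one hq'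
  have hr' : r * (z - r) = 1 := by linear_combination -hr
  have hr0 : r ≠ 0 := by intro h0; rw [h0, zero_mul] at hr'; exact zero_ne_one hr'
  have hp2 : p^2 = 1 := by
    have h4 : (p^2 - 1)^2 = 0 := by linear_combination (p^2+x*p+1)*hp + p^2*hx
    rw [pow_eq_zero_iff two_ne_zero, sub_eq_zero] at h4; exact h4
  have hq2 : q^2 = 1 := by
    have h4 : (q^2 - 1)^2 = 0 := by linear_combination (q^2+y*q+1)*hq + q^2*hy
    rw [pow_eq_zero_iff two_ne_zero, sub_eq_zero] at h4; exact h4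
  have hr2 : r^2 = 1 := by
    have h4 : (r^2 - 1)^2 = 0 := by linear_combination (r^2+z*r+1)*hr + r^2*hz
    rw [pow_eq_zero_iff two_ne_zero, sub_eq_zero] at h4; exact h4
  have hxp : x = 2*p := by
    have h5 : p * (x - 2*p) = 0 := by linear_combination -hp - hp2
    rcases mul_eq_zero.mp h5 with h6 | h6
    · exact absurd h6 hp0
    · rw [sub_eq_zero] at h6; exact h6
  have hyq : y = 2*q := by
    have h5 : q * (y - 2*q) = 0 := by linear_combination -hq - hq2
    rcases mul_eq_zero.mp h5 with h6 | h6
    · exact absurd h6 hq0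
    · rw [sub_eq_zero] at h6; exact h6
  have hzr : z = 2*r := by
    have h5 : r * (z - 2*r) = 0 := by linear_combination -hr - hr2
    rcases mul_eq_zero.mp h5 with h6 | h6
    · exact absurd h6 hr0
    · rw [sub_eq_zero] at h6; exact h6
  subst hxp; subst hyq; subst hzr
  have hwpq : w = 2*p*q := by
    have h6 : (w - 2*p*q)^2 = 0 := by linear_combination hD1 + 4*(q^2-1)*hp2
    rw [pow_eq_zero_iff two_ne_zero, sub_eq_zero] at h6; exact h6
  have huqr : u = 2*q*r := by
    have h6 : (u - 2*q*r)^2 = 0 := by linear_combination hD2 + 4*(r^2-1)*hq2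
    rw [pow_eq_zero_iff two_ne_zero, sub_eq_zero] at h6; exact h6
  have hvpr : v = 2*p*r := by
    have h6 : (v - 2*p*r)^2 = 0 := by linear_combination hD3 + 4*(p^2-1)*hr2
    rw [pow_eq_zero_iff two_ne_zero, sub_eq_zero] at h6; exact h6
  subst hwpq; subst huqr; subst hvpr
  have hPval : P = 2*p*q*r := by
    have h6 : (P - 2*p*q*r)^2 = 0 := by
      linear_combination h + (-4 + 4*r^2 + 4*q^2 - 4*q^2*r^2)*hp2
    rw [pow_eq_zero_iff two_ne_zero, sub_eq_zero] at h6; exact h6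
  subst hPval
  refine ⟨⟨!![p, 0; 0, p], by rw [Matrix.det_fin_two_of]; linear_combination hp2⟩,
         ⟨!![q, 0; 0, q], by rw [Matrix.det_fin_two_of]; linear_combination hq2⟩,
         ⟨!![r, 0; 0, r], by rw [Matrix.det_fin_two_of]; linear_combination hr2⟩,
         ?_, ?_, ?_, ?_, ?_, ?_, ?_⟩ <;>
    simp only [trSL, Matrix.trace_fin_two, Matrix.SpecialLinearGroup.coe_mul, slmul, slmul2,
      Matrix.mul_apply, Fin.sum_univ_two, Matrix.cons_val', Matrix.cons_val_zero,
      Matrix.cons_val_one, Matrix.head_cons, Matrix.empty_val',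
      Matrix.cons_val_fin_one, Matrix.head_fin_const, Matrix.of_apply] <;>
    ring
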